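/- Let N ≥ 2 and T ≥ 1 be integers, let 0 < ε < 1/N and η > 0, set ν = 1/16, and let R_{η,ν}(p) = (1/η)·Σ_{i=1}^N p_i log p_i − (1/ν)·Σ_{i=1}^N log p_i. Let ĉ_1, …, ĉ_T ∈ ℝ^N, and for t = 1, …, T+1 let p_t be a minimizer of Φ_t(p) = ⟨p, Σ_{s<t} ĉ_s⟩ + R_{η,ν}(p) over the truncated simplex Δ_N^ε. Suppose that for every t, ĉ_{t,i} ≤ 0 for all i and ⟨ĉ_t, p_t⟩ ≥ −1. Then for every p* ∈ Δ_N^ε: Σ_{t=1}^T ⟨ĉ_t, p_t − p*⟩ ≤ 16·N·log(1/ε) + (1/η)·log N + η·Σ_{t=1}^T Σ_{i=1}^N p_{t,i}·ĉ_{t,i}². -/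

import Mathlib

set_option maxHeartbeats 1000000


open Finset

/-- The `ε`-truncated probability simplex in `ℝ^N`. -/
def truncSimplex (N : ℕ) (ε : ℝ) : Set (Fin N → ℝ) :=
  {q | (∀ i, ε ≤ q i) ∧ ∑ i, q i = 1}

/-- The regularizer `R_{η,ν}(p) = (1/η)·∑ i, p i log (p i) − (1/ν)·∑ i, log (p i)`. -/
noncomputable def entLogBarrier (N : ℕ) (η ν : ℝ) (q : Fin N → ℝ) : ℝ :=
  (1 / η) * ∑ i, q i * Real.log (q i) - (1 / ν) * ∑ i, Real.log (q i)

private lemma log_quad {u : ℝ} (hu : 0 ≤ u) : u - u^2/2 ≤ Real.log (1+u) := by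
  set F : ℝ → ℝ := fun x => Real.log (1+x) - x + x^2/2 with hF
  have hder : ∀ x : ℝ, 0 ≤ x → HasDerivAt F ((1+x)⁻¹ - 1 + x) x := by
    intro x hx
    have h1 : HasDerivAt (fun y : ℝ => 1 + y) 1 x := (hasDerivAt_id x).const_add 1
    have h2 : HasDerivAt (fun y : ℝ => Real.log (1+y)) ((1+x)⁻¹ * 1) x :=
      (Real.hasDerivAt_log (by linarith)).comp x h1
    have h3 : HasDerivAt (fun y : ℝ => y^2/2) x x := by
      simpa using (hasDerivAt_pow 2 x).div_const 2
    simpa [mul_one] using (h2.fun_sub (hasDerivAt_id x)).fun_add h3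
  have hmono : MonotoneOn F (Set.Ici 0) := by
    apply monotoneOn_of_deriv_nonneg (convex_Ici 0)
    · exact fun x hx => ((hder x hx).continuousAt).continuousWithinAt
    · intro x hx
      rw [interior_Ici] at hx
      exact ((hder x (le_of_lt hx)).differentiableAt).differentiableWithinAt
    · intro x hx
      rw [interior_Ici] at hx
      have hx' : (0:ℝ) < x := hx
      rw [(hder x (le_of_lt hx')).deriv]
      have heq : (1+x)⁻¹ - 1 + x = x^2 * (1+x)⁻¹ := by
        field_simp
        ring
      rw [heq]
      positivity
  have h0 : F 0 ≤ F u := hmono (by simp) (by simpa using hu) hu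
  simp only [hF, Real.log_one] at h0
  norm_num at h0
  linarith

private lemma breg_ent_nonneg {p q : ℝ} (hp : 0 < p) (hq : 0 < q) :
    0 ≤ q * (Real.log q - Real.log p) - (q - p) := by
  have h := Real.log_le_sub_one_of_pos (show 0 < p/q by positivity)
  rw [Real.log_div hp.ne' hq.ne'] at h
  have h2 := mul_le_mul_of_nonneg_left h hq.le
  have h3 : q * (p/q - 1) = p - q := by field_simp
  nlinarith [h2]

private lemma breg_bar_nonneg {p q : ℝ} (hp : 0 < p) (hq : 0 < q) :
    0 ≤ (Real.log p - Real.log q) + (q - p)/p := by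
  have h := Real.log_le_sub_one_of_pos (show 0 < q/p by positivity)
  rw [Real.log_div hq.ne' hp.ne'] at h
  have h3 : q/p - 1 = (q-p)/p := by field_simp
  linarith [h]

private lemma percoord {η p q c : ℝ} (hη : 0 < η) (hp : 0 < p) (hq : 0 < q)
    (hqp : q ≤ 16/15 * p) (hc : c ≤ 0) :
    c*(p-q) + ((1/η)*(1 + Real.log p) - 16/p)*(q-p)
      + (1/η)*(p*Real.log p - q*Real.log q) - 16*(Real.log p - Real.log q)
    ≤ η*p*c^2 := by
  have hkey : c*(p-q) + ((1/η)*(1 + Real.log p) - 16/p)*(q-p)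
      + (1/η)*(p*Real.log p - q*Real.log q) - 16*(Real.log p - Real.log q)
      = (-c)*(q-p) - (1/η)*(q*(Real.log q - Real.log p) - (q-p))
        - 16*((Real.log p - Real.log q) + (q-p)/p) := by
    field_simp
    ring
  rw [hkey]
  have hE := breg_ent_nonneg hp hq
  have hB := breg_bar_nonneg hp hq
  have hη' : 0 ≤ 1/η := by positivity
  rcases le_or_gt q p with hle | hlt
  · have h1 : (-c)*(q-p) ≤ 0 := mul_nonpos_of_nonneg_of_nonpos (by linarith) (by linarith)
    have h2 : 0 ≤ η*p*c^2 := by positivity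
    have h3 := mul_nonneg hη' hE
    linarith
  · -- p < q ≤ 16/15 p
    set u : ℝ := (q-p)/p with hu
    have hu0 : 0 < u := div_pos (by linarith) hp
    have hu15 : u ≤ 1/15 := by
      rw [hu, div_le_iff₀ hp]
      linarith
    have hqp2 : q - p = u*p := by
      rw [hu, div_mul_cancel₀ _ hp.ne']
    have hqpu : q = (1+u)*p := by nlinarith [hqp2]
    have hlog : Real.log q - Real.log p = Real.log (1+u) := by
      rw [hqpu, Real.log_mul (by positivity) hp.ne']
      ring
    have hquad := log_quad hu0.le
    -- entropy Bregman lower bound: q(log q - log p) - (q-p) ≥ (7/15) p u²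
    have hEq : (7/15)*p*u^2 ≤ q*(Real.log q - Real.log p) - (q-p) := by
      rw [hlog, hqpu]
      have h1 : (1+u)*p*(u - u^2/2) ≤ (1+u)*p*Real.log (1+u) :=
        mul_le_mul_of_nonneg_left hquad (by positivity)
      have h2 : (1+u)*p - p = u*p := by ring
      nlinarith [hp.le, hu0.le, hu15]
    have hfin : (-c)*(q-p) - (1/η)*((7/15)*p*u^2) ≤ η*p*c^2 := by
      rw [hqp2, ← sub_nonneg]
      have hD : η*p*c^2 - ((-c)*(u*p) - (1/η)*((7/15)*p*u^2))
          = (p/η) * (η^2*c^2 + η*c*u + (7/15)*u^2) := by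
        field_simp
        ring
      rw [hD]
      apply mul_nonneg (by positivity)
      nlinarith [sq_nonneg (u + 15/14*η*c), sq_nonneg (η*c)]
    have : (1/η)*((7/15)*p*u^2) ≤ (1/η)*(q*(Real.log q - Real.log p) - (q-p)) :=
      mul_le_mul_of_nonneg_left hEq hη'
    nlinarith [this, hB]

private lemma dir_opt {N : ℕ} {η ε : ℝ} (hη : 0 < η) (hε : 0 < ε) (L p r : Fin N → ℝ)
    (hp : p ∈ truncSimplex N ε) (hr : r ∈ truncSimplex N ε)
    (hmin : ∀ q ∈ truncSimplex N ε,
      (∑ i, p i * L i) + entLogBarrier N η (1/16) p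
        ≤ (∑ i, q i * L i) + entLogBarrier N η (1/16) q) :
    0 ≤ ∑ i, (L i + (1/η)*(1 + Real.log (p i)) - 16/(p i)) * (r i - p i) := by
  set h : Fin N → ℝ := fun i => r i - p i with hh
  have hppos : ∀ i, 0 < p i := fun i => lt_of_lt_of_le hε (hp.1 i)
  -- the one-dimensional function
  set f : ℝ → ℝ := fun l =>
    (∑ i, (p i + l * h i) * L i) + entLogBarrier N η (1/16) (fun i => p i + l * h i) with hf
  -- membership of the segment
  have hseg : ∀ l : ℝ, 0 < l → l ≤ 1 → (fun i => p i + l * h i) ∈ truncSimplex N ε := by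
    intro l hl0 hl1
    constructor
    · intro i
      show ε ≤ p i + l * h i
      have h1 : p i + l * h i = (1-l) * p i + l * r i := by simp [hh]; ring
      rw [h1]
      have := hp.1 i; have := hr.1 i
      nlinarith
    · have : ∑ i, (p i + l * h i) = (∑ i, p i) + l * ((∑ i, r i) - ∑ i, p i) := by
        simp [hh, Finset.sum_add_distrib, Finset.mul_sum, mul_sub]
      rw [this, hp.2, hr.2]; ring
  -- f 0 is the value at p
  have hf0 : f 0 = (∑ i, p i * L i) + entLogBarrier N η (1/16) p := by
    simp [hf]
  -- derivative of f at 0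
  set D : ℝ := (∑ i, h i * L i) + ((1/η) * (∑ i, h i * (Real.log (p i) + 1))
      - (1/(1/16 : ℝ)) * (∑ i, h i / p i)) with hD
  have hder : HasDerivAt f D 0 := by
    have hA : HasDerivAt (fun l : ℝ => ∑ i, (p i + l * h i) * L i) (∑ i, h i * L i) 0 := by
      apply HasDerivAt.fun_sum
      intro i _
      simpa using ((hasDerivAt_mul_const (h i)).const_add (p i)).mul_const (L i)
    have hgi : ∀ i : Fin N, HasDerivAt (fun l : ℝ => p i + l * h i) (h i) 0 :=
      fun i => by simpa using (hasDerivAt_mul_const (h i)).const_add (p i)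
    have hlogi : ∀ i : Fin N, HasDerivAt (fun l : ℝ => Real.log (p i + l * h i))
        (h i / p i) 0 := by
      intro i
      have h1 : HasDerivAt Real.log (p i + 0 * h i)⁻¹ ((fun l : ℝ => p i + l * h i) 0) := by
        apply Real.hasDerivAt_log
        simp [(hppos i).ne']
      have := h1.comp 0 (hgi i)
      simpa [div_eq_inv_mul, mul_comm, Function.comp_def] using this
    have hB : HasDerivAt (fun l : ℝ => ∑ i, (p i + l * h i) * Real.log (p i + l * h i))
        (∑ i, h i * (Real.log (p i) + 1)) 0 := by
      apply HasDerivAt.fun_sum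
      intro i _
      have h2 := (hgi i).fun_mul (hlogi i)
      have heq : h i * Real.log (p i) + p i * (h i / p i)
          = h i * (Real.log (p i) + 1) := by
        field_simp [(hppos i).ne']
      rw [← heq]
      simpa using h2
    have hC : HasDerivAt (fun l : ℝ => ∑ i, Real.log (p i + l * h i)) (∑ i, h i / p i) 0 :=
      HasDerivAt.fun_sum (fun i _ => hlogi i)
    have := hA.fun_add (((hB.const_mul (1/η)).fun_sub (hC.const_mul (1/(1/16 : ℝ)))))
    simpa [hf, entLogBarrier, hD, mul_comm] using this
  -- nonneg slope
  have hslope : ∀ᶠ l in nhdsWithin 0 (Set.Ioi 0), 0 ≤ (f l - f 0) / (l - 0) := by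
    filter_upwards [Ioc_mem_nhdsGT_of_mem (Set.left_mem_Ico.2 (by norm_num : (0:ℝ) < 1))]
    intro l hl
    apply div_nonneg _ (by simpa using hl.1.le)
    have := hmin _ (hseg l hl.1 hl.2)
    rw [hf0]
    simp only [hf]
    linarith [this]
  have htend : Filter.Tendsto (fun l => (f l - f 0) / (l - 0)) (nhdsWithin 0 (Set.Ioi 0)) (nhds D) := by
    have h1 := hasDerivAt_iff_tendsto_slope.1 hder
    have h2 : nhdsWithin (0:ℝ) (Set.Ioi 0) ≤ nhdsWithin 0 {(0:ℝ)}ᶜ :=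
      nhdsWithin_mono 0 (fun x hx => ne_of_gt hx)
    have := h1.mono_left h2
    apply this.congr
    intro l
    simp [slope_def_field, div_eq_inv_mul]
  have hD0 : 0 ≤ D := ge_of_tendsto htend hslope
  -- identify D with the sum
  have hDeq : D = ∑ i, (L i + (1/η)*(1 + Real.log (p i)) - 16/(p i)) * (r i - p i) := by
    rw [hD]
    rw [Finset.mul_sum, Finset.mul_sum, ← Finset.sum_sub_distrib, ← Finset.sum_add_distrib]
    apply Finset.sum_congr rfl
    intro i _
    have : p i ≠ 0 := (hppos i).ne'
    field_simp [hh]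
    ring
  rwa [hDeq] at hD0

private lemma barval {x M : ℝ} (hx : 0 < x) (hM : 0 ≤ M) :
    (1+M) * (16*(1/x - 1/((1+M)*x))*((1+M)*x - x)) = 16*M^2 := by
  have h1 : x ≠ 0 := hx.ne'
  have h2 : (1:ℝ)+M ≠ 0 := by positivity
  field_simp
  ring

private lemma stability {N : ℕ} {η ε : ℝ} (hη : 0 < η) (hε : 0 < ε) (hN : 0 < N)
    (L c p q : Fin N → ℝ)
    (hpK : p ∈ truncSimplex N ε) (hqK : q ∈ truncSimplex N ε)
    (hpmin : ∀ r ∈ truncSimplex N ε,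
      (∑ i, p i * L i) + entLogBarrier N η (1/16) p
        ≤ (∑ i, r i * L i) + entLogBarrier N η (1/16) r)
    (hqmin : ∀ r ∈ truncSimplex N ε,
      (∑ i, q i * (L i + c i)) + entLogBarrier N η (1/16) q
        ≤ (∑ i, r i * (L i + c i)) + entLogBarrier N η (1/16) r)
    (hc : ∀ i, c i ≤ 0) (hcp : -1 ≤ ∑ i, c i * p i) :
    ((∑ i, p i * (L i + c i)) + entLogBarrier N η (1/16) p)
      - ((∑ i, q i * (L i + c i)) + entLogBarrier N η (1/16) q)
    ≤ η * ∑ i, p i * c i ^ 2 := by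
  have hppos : ∀ i, 0 < p i := fun i => lt_of_lt_of_le hε (hpK.1 i)
  have hqpos : ∀ i, 0 < q i := fun i => lt_of_lt_of_le hε (hqK.1 i)
  have hA := dir_opt hη hε L p q hpK hqK hpmin
  have hB := dir_opt hη hε (fun i => L i + c i) q p hqK hpK hqmin
  -- multiplicative stability
  have hst : ∀ i, q i ≤ 16/15 * p i := by
    by_contra hcon
    push_neg at hcon
    obtain ⟨i0, hi0⟩ := hcon
    have hne : Nonempty (Fin N) := ⟨⟨0, hN⟩⟩
    obtain ⟨j, -, hj⟩ := Finset.exists_max_image Finset.univ (fun i => q i / p i)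
      Finset.univ_nonempty
    set M : ℝ := q j / p j - 1 with hM
    have hqj : q j = (1+M)*p j := by
      rw [hM, show (1:ℝ) + (q j / p j - 1) = q j / p j by ring, div_mul_cancel₀ _ (hppos j).ne']
    have hMlb : 1/15 < M := by
      have h1 : q i0 / p i0 ≤ q j / p j := hj i0 (mem_univ i0)
      have h2 : 16/15 < q i0 / p i0 := by
        rw [lt_div_iff₀ (hppos i0)]; linarith [hi0]
      rw [hM]; linarith
    have hM0 : (0:ℝ) ≤ M := le_trans (by norm_num) hMlb.le
    clear hM
    clear_value M
    have hub : ∀ i, q i - p i ≤ M * p i := by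
      intro i
      have h1 : q i / p i ≤ q j / p j := hj i (mem_univ i)
      rw [div_le_div_iff₀ (hppos i) (hppos j)] at h1
      have := hppos i
      nlinarith [hqj, hppos j]
    -- gradient inequality
    have hGI : ∑ i, ((1/η)*(Real.log (q i) - Real.log (p i)) + 16*(1/(p i) - 1/(q i)))*(q i - p i)
        ≤ ∑ i, (-(c i))*(q i - p i) := by
      have hsum := add_nonneg hA hB
      rw [← Finset.sum_add_distrib] at hsum
      rw [← sub_nonneg, ← Finset.sum_sub_distrib]
      have heq : ∀ i ∈ Finset.univ (α := Fin N),
          (-(c i))*(q i - p i) - ((1/η)*(Real.log (q i) - Real.log (p i)) + 16*(1/(p i) - 1/(q i)))*(q i - p i)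
          = (L i + (1/η)*(1 + Real.log (p i)) - 16/(p i)) * (q i - p i)
            + ((L i + c i) + (1/η)*(1 + Real.log (q i)) - 16/(q i)) * (p i - q i) := by
        intro i _
        have h1 : p i ≠ 0 := (hppos i).ne'
        have h2 : q i ≠ 0 := (hqpos i).ne'
        field_simp
        ring
      rw [Finset.sum_congr rfl heq]
      exact hsum
    -- bound RHS by M
    have hrhs : ∑ i, (-(c i))*(q i - p i) ≤ M := by
      have h1 : ∀ i ∈ Finset.univ (α := Fin N), (-(c i))*(q i - p i) ≤ M * ((-(c i)) * p i) := by
        intro i _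
        have := mul_le_mul_of_nonneg_left (hub i) (neg_nonneg.2 (hc i))
        nlinarith [this]
      calc ∑ i, (-(c i))*(q i - p i) ≤ ∑ i, M * ((-(c i)) * p i) := Finset.sum_le_sum h1
        _ = M * (-(∑ i, c i * p i)) := by
            rw [← Finset.mul_sum, ← Finset.sum_neg_distrib]
            congr 1
            apply Finset.sum_congr rfl
            intro i _; ring
        _ ≤ M * 1 := by
            apply mul_le_mul_of_nonneg_left _ hM0
            linarith [hcp]
        _ = M := mul_one M
    -- bound LHS below by the j-th term
    have hterm : ∀ i, 0 ≤ ((1/η)*(Real.log (q i) - Real.log (p i)) + 16*(1/(p i) - 1/(q i)))*(q i - p i) := by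
      intro i
      rcases le_total (p i) (q i) with hle | hle
      · apply mul_nonneg _ (by linarith)
        have hlog : Real.log (p i) ≤ Real.log (q i) := Real.log_le_log (hppos i) hle
        have hinv : 1/(q i) ≤ 1/(p i) := one_div_le_one_div_of_le (hppos i) hle
        have : 0 ≤ 1/η := by positivity
        nlinarith
      · have hlog : Real.log (q i) ≤ Real.log (p i) := Real.log_le_log (hqpos i) hle
        have hinv : 1/(p i) ≤ 1/(q i) := one_div_le_one_div_of_le (hqpos i) hle
        have hη' : (0:ℝ) ≤ 1/η := by positivity
        have h3 : 0 ≤ (-((1/η)*(Real.log (q i) - Real.log (p i)) + 16*(1/(p i) - 1/(q i))))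
            * (-(q i - p i)) := by
          apply mul_nonneg _ (by linarith)
          nlinarith
        nlinarith [h3]
    have hsingle : ((1/η)*(Real.log (q j) - Real.log (p j)) + 16*(1/(p j) - 1/(q j)))*(q j - p j)
        ≤ ∑ i, ((1/η)*(Real.log (q i) - Real.log (p i)) + 16*(1/(p i) - 1/(q i)))*(q i - p i) :=
      Finset.single_le_sum (fun i _ => hterm i) (mem_univ j)
    -- the barrier part of the j-th term is at least 16 M^2/(1+M)
    have hlogj : Real.log (p j) ≤ Real.log (q j) := by
      apply Real.log_le_log (hppos j)
      nlinarith [hqj, hppos j]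
    have hbar : 16*(1/(p j) - 1/(q j))*(q j - p j) ≤ ((1/η)*(Real.log (q j) - Real.log (p j)) + 16*(1/(p j) - 1/(q j)))*(q j - p j) := by
      have h4 : 0 ≤ q j - p j := by nlinarith [hqj, hppos j]
      have hη' : (0:ℝ) ≤ 1/η := by positivity
      have h5 : ((1/η)*(Real.log (q j) - Real.log (p j)) + 16*(1/(p j) - 1/(q j)))*(q j - p j)
          = (1/η)*(Real.log (q j) - Real.log (p j))*(q j - p j)
            + 16*(1/(p j) - 1/(q j))*(q j - p j) := by ring
      rw [h5]
      have h6 : 0 ≤ (1/η)*(Real.log (q j) - Real.log (p j))*(q j - p j) :=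
        mul_nonneg (mul_nonneg hη' (by linarith)) h4
      linarith
    have hval2 : (1+M) * (16*(1/(p j) - 1/(q j))*(q j - p j)) = 16*M^2 := by
      rw [hqj]
      exact barval (hppos j) hM0
    have hBM : 16*(1/(p j) - 1/(q j))*(q j - p j) ≤ M :=
      le_trans hbar (le_trans hsingle (le_trans hGI hrhs))
    have h16 : 16*M^2 ≤ (1+M)*M := by
      rw [← hval2]
      exact mul_le_mul_of_nonneg_left hBM (by linarith)
    clear hGI hA hB hsingle hbar hrhs hterm hub hqmin hpmin hval2 hBM hlogj hqj hc hcp hppos hqpos hpK hqK hj hi0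
    nlinarith [h16, hMlb, hM0]
  -- main chain
  set E : Fin N → ℝ := fun i => (L i + (1/η)*(1 + Real.log (p i)) - 16/(p i)) * (q i - p i)
    with hE
  set G : Fin N → ℝ := fun i =>
    (p i*(L i + c i) - q i*(L i + c i))
      + ((1/η)*(p i*Real.log (p i) - q i*Real.log (q i))
        - 16*(Real.log (p i) - Real.log (q i))) + E i with hG
  have hGle : ∀ i ∈ Finset.univ (α := Fin N), G i ≤ η*(p i * c i^2) := by
    intro i _
    have h := percoord hη (hppos i) (hqpos i) (hst i) (hc i)
    have h1 : G i = c i*(p i - q i) + ((1/η)*(1 + Real.log (p i)) - 16/(p i))*(q i - p i)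
        + (1/η)*(p i*Real.log (p i) - q i*Real.log (q i))
        - 16*(Real.log (p i) - Real.log (q i)) := by
      simp only [hG, hE]; ring
    have h2 : η*(p i)*(c i)^2 = η*(p i * c i^2) := by ring
    rw [h1]
    linarith [h, h2]
  have hXE : ((∑ i, p i * (L i + c i)) + entLogBarrier N η (1/16) p)
      - ((∑ i, q i * (L i + c i)) + entLogBarrier N η (1/16) q) + (∑ i, E i)
      = ∑ i, G i := by
    have h16 : (1:ℝ)/(1/16) = 16 := by norm_num
    simp only [hG, entLogBarrier, h16, Finset.sum_add_distrib, Finset.sum_sub_distrib,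
      ← Finset.mul_sum]
    ring
  have hfinal : ∑ i, G i ≤ η * ∑ i, p i * c i ^ 2 := by
    calc ∑ i, G i ≤ ∑ i, η*(p i * c i^2) := Finset.sum_le_sum hGle
      _ = η * ∑ i, p i * c i ^ 2 := (Finset.mul_sum _ _ _).symm
  linarith [hXE, hA, hfinal]

private lemma coord_le_one {N : ℕ} {ε : ℝ} (hε : 0 < ε) {w : Fin N → ℝ}
    (hw : w ∈ truncSimplex N ε) (i : Fin N) : w i ≤ 1 := by
  have h1 : ∀ j ∈ Finset.univ (α := Fin N), 0 ≤ w j :=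
    fun j _ => le_trans hε.le (hw.1 j)
  have := Finset.single_le_sum h1 (mem_univ i)
  rw [hw.2] at this
  exact this

private lemma entropy_lb {N : ℕ} (hN : 0 < N) {ε : ℝ} (hε : 0 < ε) {w : Fin N → ℝ}
    (hw : w ∈ truncSimplex N ε) :
    -Real.log N ≤ ∑ i, w i * Real.log (w i) := by
  have hNR : (0:ℝ) < N := by exact_mod_cast hN
  have hkey : ∀ i ∈ Finset.univ (α := Fin N),
      w i - 1/N - w i * Real.log N ≤ w i * Real.log (w i) := by
    intro i _
    have hwi : 0 < w i := lt_of_lt_of_le hε (hw.1 i)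
    have h1 := Real.log_le_sub_one_of_pos (show (0:ℝ) < 1/(N * w i) by positivity)
    rw [one_div, Real.log_inv, Real.log_mul (ne_of_gt hNR) hwi.ne'] at h1
    -- -(log N + log w i) ≤ 1/(N*w i) - 1
    have h2 := mul_le_mul_of_nonneg_left h1 hwi.le
    have h3 : w i * ((↑N * w i)⁻¹ - 1) = 1/N - w i := by
      field_simp
    rw [h3] at h2
    nlinarith [h2]
  have := Finset.sum_le_sum hkey
  rw [Finset.sum_sub_distrib, Finset.sum_sub_distrib, hw.2] at this
  simp only [Finset.sum_const, card_univ, Fintype.card_fin, nsmul_eq_mul, ← Finset.sum_mul] at this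
  rw [hw.2] at this
  have h4 : (N:ℝ) * (1/N) = 1 := by field_simp
  rw [h4] at this
  linarith [this]

private lemma ent_nonpos {N : ℕ} {ε : ℝ} (hε : 0 < ε) {w : Fin N → ℝ}
    (hw : w ∈ truncSimplex N ε) : ∑ i, w i * Real.log (w i) ≤ 0 := by
  apply Finset.sum_nonpos
  intro i _
  have hwi : 0 < w i := lt_of_lt_of_le hε (hw.1 i)
  have h1 := Real.log_nonpos hwi.le (coord_le_one hε hw i)
  nlinarith [h1, hwi]

private lemma barrier_bounds {N : ℕ} {ε : ℝ} (hε : 0 < ε) {w : Fin N → ℝ}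
    (hw : w ∈ truncSimplex N ε) :
    -(N * Real.log (1/ε)) ≤ ∑ i, Real.log (w i) ∧ ∑ i, Real.log (w i) ≤ 0 := by
  constructor
  · have hkey : ∀ i ∈ Finset.univ (α := Fin N), -Real.log (1/ε) ≤ Real.log (w i) := by
      intro i _
      rw [one_div, Real.log_inv, neg_neg]
      exact Real.log_le_log hε (hw.1 i)
    have := Finset.sum_le_sum hkey
    simp only [Finset.sum_const, card_univ, Fintype.card_fin, nsmul_eq_mul] at this
    linarith [this]
  · apply Finset.sum_nonpos
    intro i _
    exact Real.log_nonpos (le_trans hε.le (hw.1 i)) (coord_le_one hε hw i)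
/-- **Deterministic pathwise regret bound for log-barrier FTRL with `ν = 1/16`.**
(0-indexed: `p t` is the paper's `p_{t+1}` and `chat t` the paper's `ĉ_{t+1}`.) If each `chat t`
is componentwise nonpositive with `⟨chat t, p t⟩ ≥ −1`, then for every `p* ∈ Δ_N^ε`:
`∑_{t<T} ⟨chat t, p t − p*⟩ ≤ 16 N log(1/ε) + (1/η) log N + η ∑_{t<T} ∑ i, p t i · (chat t i)²`. -/
theorem ftrl_log_barrier_pathwise_regret {N : ℕ} (hN : 2 ≤ N) (T : ℕ) (hT : 1 ≤ T)
    (ε η : ℝ) (hε0 : 0 < ε) (hε1 : ε < 1 / N) (hη : 0 < η)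
    (chat : ℕ → Fin N → ℝ) (p : ℕ → Fin N → ℝ)
    (hp : ∀ t ≤ T, p t ∈ truncSimplex N ε ∧ ∀ q ∈ truncSimplex N ε,
      (∑ i, p t i * ∑ s ∈ Finset.range t, chat s i) + entLogBarrier N η (1 / 16) (p t)
        ≤ (∑ i, q i * ∑ s ∈ Finset.range t, chat s i) + entLogBarrier N η (1 / 16) q)
    (hchat : ∀ t < T, (∀ i, chat t i ≤ 0) ∧ -1 ≤ ∑ i, chat t i * p t i)
    (pstar : Fin N → ℝ) (hps : pstar ∈ truncSimplex N ε) :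
    ∑ t ∈ Finset.range T, ∑ i, chat t i * (p t i - pstar i)
      ≤ 16 * N * Real.log (1 / ε) + (1 / η) * Real.log N
        + η * ∑ t ∈ Finset.range T, ∑ i, p t i * (chat t i) ^ 2 := by
  have hNpos : 0 < N := by omega
  -- the induction: follow-the-leader style telescoping plus per-step stability
  have main : ∀ T', T' ≤ T →
      ∑ t ∈ Finset.range T', (∑ i, chat t i * p t i)
        ≤ ((∑ i, p T' i * ∑ s ∈ Finset.range T', chat s i)
            + entLogBarrier N η (1/16) (p T'))
          - entLogBarrier N η (1/16) (p 0)
          + η * ∑ t ∈ Finset.range T', ∑ i, p t i * chat t i ^ 2 := by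
    intro T'
    induction T' with
    | zero => intro _; simp
    | succ n ih =>
      intro hn1
      have hn : n ≤ T := by omega
      have IH := ih hn
      have hca := (hchat n (by omega)).1
      have hcb := (hchat n (by omega)).2
      have hstab := stability (η := η) (ε := ε) hη hε0 hNpos
        (fun i => ∑ s ∈ Finset.range n, chat s i) (chat n) (p n) (p (n+1))
        (hp n hn).1 (hp (n+1) hn1).1
        (hp n hn).2
        (by
          intro r hr
          have h2 := (hp (n+1) hn1).2 r hr
          have h3 : ∀ w : Fin N → ℝ,
              (∑ i, w i * ((∑ s ∈ Finset.range n, chat s i) + chat n i))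
                = ∑ i, w i * ∑ s ∈ Finset.range (n+1), chat s i :=
            fun w => Finset.sum_congr rfl (fun i _ => by rw [Finset.sum_range_succ])
          rw [h3 (p (n+1)), h3 r]
          exact h2)
        hca hcb
      have h3 : ∀ w : Fin N → ℝ,
          (∑ i, w i * ((∑ s ∈ Finset.range n, chat s i) + chat n i))
            = ∑ i, w i * ∑ s ∈ Finset.range (n+1), chat s i :=
        fun w => Finset.sum_congr rfl (fun i _ => by rw [Finset.sum_range_succ])
      rw [h3 (p n), h3 (p (n+1))] at hstab
      have hsplit : (∑ i, p n i * ∑ s ∈ Finset.range (n+1), chat s i)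
          = (∑ i, p n i * ∑ s ∈ Finset.range n, chat s i) + ∑ i, chat n i * p n i := by
        simp only [Finset.sum_range_succ, mul_add]
        rw [Finset.sum_add_distrib]
        congr 1
        exact Finset.sum_congr rfl (fun i _ => mul_comm _ _)
      rw [Finset.sum_range_succ, Finset.sum_range_succ
        (f := fun t => ∑ i, p t i * chat t i ^ 2)]
      linarith [IH, hstab, hsplit]
  have hmainT := main T le_rfl
  have hTmin := (hp T le_rfl).2 pstar hps
  have hswap : ∑ i, pstar i * ∑ s ∈ Finset.range T, chat s i
      = ∑ t ∈ Finset.range T, ∑ i, chat t i * pstar i := by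
    simp only [Finset.mul_sum]
    rw [Finset.sum_comm]
    exact Finset.sum_congr rfl (fun t _ => Finset.sum_congr rfl (fun i _ => mul_comm _ _))
  have hgoal : ∑ t ∈ Finset.range T, ∑ i, chat t i * (p t i - pstar i)
      = (∑ t ∈ Finset.range T, ∑ i, chat t i * p t i)
        - ∑ t ∈ Finset.range T, ∑ i, chat t i * pstar i := by
    simp only [mul_sub, Finset.sum_sub_distrib]
  -- regularizer bounds
  have hη' : (0:ℝ) ≤ 1/η := by positivity
  have h16 : (1:ℝ)/(1/16) = 16 := by norm_num
  have hR0 : -((1/η) * Real.log N) ≤ entLogBarrier N η (1/16) (p 0) := by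
    have h1 := entropy_lb hNpos hε0 (hp 0 (by omega)).1
    have h2 := (barrier_bounds hε0 (hp 0 (by omega)).1).2
    have h3 := mul_le_mul_of_nonneg_left h1 hη'
    unfold entLogBarrier
    rw [h16]
    nlinarith [h3, h2]
  have hRps : entLogBarrier N η (1/16) pstar ≤ 16 * N * Real.log (1/ε) := by
    have h1 := ent_nonpos hε0 hps
    have h2 := (barrier_bounds hε0 hps).1
    have h3 := mul_le_mul_of_nonneg_left h1 hη'
    unfold entLogBarrier
    rw [h16]
    nlinarith [h3, h2]
  rw [hgoal]
  linarith [hmainT, hTmin, hswap, hR0, hRps]
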